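/- Let ω ∈ ℕ, let C be a level-k dyadic cell of the grid {0,…,2^ω−1}² with corner (a,b), and let p ∈ C be any grid point of C. Then morton_ω(a,b) ≤ morton_ω(p) ≤ morton_ω(a,b) + 4^k − 1. (This is the paper's Observation: π(C)∘0̄ ≤ π(q) ≤ π(C)∘1̄, with bit strings read as binary integers.) -/

import Mathlib

/-- The Morton (Z-order) encoding of a pair of `ω`-bit numbers, obtained by
interleaving binary digits: `morton ω x y = Σ_{i<ω} (bitᵢ(x)·2^{2i+1} + bitᵢ(y)·2^{2i})`. -/
def morton (ω : ℕ) (x y : ℕ) : ℕ :=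
  ∑ i ∈ Finset.range ω,
    ((Nat.testBit x i).toNat * 2 ^ (2 * i + 1) + (Nat.testBit y i).toNat * 2 ^ (2 * i))

lemma low_bits_zero {k n : ℕ} (hd : 2 ^ k ∣ n) {i : ℕ} (hi : i < k) :
    n.testBit i = false := by
  have h := Nat.testBit_mod_two_pow n k i
  rw [Nat.mod_eq_zero_of_dvd hd] at h
  simp [hi] at h
  exact h

lemma high_bits_eq {k a q : ℕ} (hd : 2 ^ k ∣ a) (h1 : a ≤ q) (h2 : q < a + 2 ^ k)
    {i : ℕ} (hi : k ≤ i) : q.testBit i = a.testBit i := by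
  obtain ⟨m, rfl⟩ := hd
  obtain ⟨r, rfl⟩ : ∃ r, q = 2 ^ k * m + r := ⟨q - 2 ^ k * m, by omega⟩
  have hr : r < 2 ^ k := by omega
  have hdiv : (2 ^ k * m + r) / 2 ^ i = (2 ^ k * m) / 2 ^ i := by
    obtain ⟨j, rfl⟩ := Nat.exists_eq_add_of_le hi
    rw [pow_add, ← Nat.div_div_eq_div_mul, ← Nat.div_div_eq_div_mul]
    congr 1
    have hp : 0 < (2:ℕ) ^ k := Nat.pow_pos (by norm_num)
    rw [Nat.mul_add_div hp, Nat.div_eq_of_lt hr, Nat.mul_div_cancel_left _ hp]; omega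
  rw [Nat.testBit_eq_decide_div_mod_eq, Nat.testBit_eq_decide_div_mod_eq, hdiv]

lemma geom_sum_4 (k : ℕ) :
    ∑ i ∈ Finset.range k, (2 ^ (2 * i + 1) + 2 ^ (2 * i)) = 4 ^ k - 1 := by
  induction k with
  | zero => simp
  | succ n ih =>
      rw [Finset.sum_range_succ, ih]
      have : (1:ℕ) ≤ 4 ^ n := Nat.one_le_pow _ _ (by norm_num)
      have h1 : (2:ℕ) ^ (2 * n + 1) = 2 * 4 ^ n := by
        rw [pow_succ, pow_mul]; ring
      have h2 : (2:ℕ) ^ (2 * n) = 4 ^ n := by rw [pow_mul]; norm_num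
      rw [h1, h2, pow_succ]
      omega

theorem morton_cell_bounds (ω k a b : ℕ) (hk : k ≤ ω)
    (ha : a < 2 ^ ω) (hb : b < 2 ^ ω) (hda : 2 ^ k ∣ a) (hdb : 2 ^ k ∣ b)
    (p : ℕ × ℕ)
    (hp1 : a ≤ p.1 ∧ p.1 ≤ a + 2 ^ k - 1) (hp2 : b ≤ p.2 ∧ p.2 ≤ b + 2 ^ k - 1) :
    morton ω a b ≤ morton ω p.1 p.2 ∧
      morton ω p.1 p.2 ≤ morton ω a b + 4 ^ k - 1 := by
  have hpow : 0 < (2:ℕ) ^ k := Nat.pow_pos (by norm_num)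
  have hx1 : p.1 < a + 2 ^ k := by omega
  have hx2 : p.2 < b + 2 ^ k := by omega
  set f : ℕ → ℕ := fun i =>
    (Nat.testBit p.1 i).toNat * 2 ^ (2 * i + 1) + (Nat.testBit p.2 i).toNat * 2 ^ (2 * i) with hf
  set g : ℕ → ℕ := fun i =>
    (Nat.testBit a i).toNat * 2 ^ (2 * i + 1) + (Nat.testBit b i).toNat * 2 ^ (2 * i) with hg
  have hterm_high : ∀ i, k ≤ i → f i = g i := by
    intro i hi
    simp only [hf, hg, high_bits_eq hda hp1.1 hx1 hi, high_bits_eq hdb hp2.1 hx2 hi]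
  have hterm_low : ∀ i, i < k → g i = 0 := by
    intro i hi
    simp only [hg, low_bits_zero hda hi, low_bits_zero hdb hi, Bool.toNat_false,
      Nat.zero_mul, Nat.add_zero]
  constructor
  · apply Finset.sum_le_sum
    intro i _
    show g i ≤ f i
    by_cases hik : i < k
    · rw [hterm_low i hik]; exact Nat.zero_le _
    · rw [← hterm_high i (by omega)]
  · -- split sums
    have hsplit : ∀ h : ℕ → ℕ, ∑ i ∈ Finset.range ω, h i =
        ∑ i ∈ Finset.range k, h i + ∑ i ∈ Finset.Ico k ω, h i := by
      intro h
      rw [← Finset.sum_range_add_sum_Ico h hk]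
    have hmid : ∑ i ∈ Finset.Ico k ω, f i = ∑ i ∈ Finset.Ico k ω, g i :=
      Finset.sum_congr rfl (fun i hi => hterm_high i (Finset.mem_Ico.mp hi).1)
    have hglow : ∑ i ∈ Finset.range k, g i = 0 :=
      Finset.sum_eq_zero (fun i hi => hterm_low i (Finset.mem_range.mp hi))
    have hflow : ∑ i ∈ Finset.range k, f i ≤ 4 ^ k - 1 := by
      rw [← geom_sum_4 k]
      apply Finset.sum_le_sum
      intro i _
      simp only [hf]
      have h1 : (Nat.testBit p.1 i).toNat ≤ 1 := Bool.toNat_le _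
      have h2 : (Nat.testBit p.2 i).toNat ≤ 1 := Bool.toNat_le _
      calc (Nat.testBit p.1 i).toNat * 2 ^ (2 * i + 1) + (Nat.testBit p.2 i).toNat * 2 ^ (2 * i)
          ≤ 1 * 2 ^ (2 * i + 1) + 1 * 2 ^ (2 * i) := by
            gcongr
        _ = 2 ^ (2 * i + 1) + 2 ^ (2 * i) := by ring
    show ∑ i ∈ Finset.range ω, f i ≤ ∑ i ∈ Finset.range ω, g i + 4 ^ k - 1
    rw [hsplit f, hsplit g, hmid, hglow]
    have h4 : (1:ℕ) ≤ 4 ^ k := Nat.one_le_pow _ _ (by norm_num)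
    omega
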